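/- For every continuous compactly supported vector field φ : ℝⁿ → ℝⁿ, the map K_ℓ → ℝ given by γ ↦ ⟨[γ], φ⟩ = ∫_{[0,ℓ]} ⟨φ(γ(t)), γ̇(t)⟩ dt is continuous with respect to the uniform norm on K_ℓ, and it extends continuously to the compactification K̂_ℓ with value 0 at the constant curve ∞. -/

import Mathlib

open MeasureTheory Set OnePoint
open scoped RealInnerProductSpace

/-- The extension of a curve `γ : [0,ℓ] → ℝⁿ` to `ℝ` by the projection onto `[0,ℓ]`. -/
noncomputable def curveExt {n : ℕ} {ℓ : ℝ} (hℓ : 0 ≤ ℓ)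
    (γ : C(Set.Icc (0:ℝ) ℓ, EuclideanSpace ℝ (Fin n))) : ℝ → EuclideanSpace ℝ (Fin n) :=
  fun t => γ (Set.projIcc 0 ℓ hℓ t)

/-- The action `⟨[γ], φ⟩ = ∫_{[0,ℓ]} ⟪φ(γ(t)), γ̇(t)⟫ dt` of the charge `[γ]` on a vector
field `φ`. -/
noncomputable def curveAction {n : ℕ} {ℓ : ℝ} (hℓ : 0 ≤ ℓ)
    (φ : EuclideanSpace ℝ (Fin n) → EuclideanSpace ℝ (Fin n))
    (γ : C(Set.Icc (0:ℝ) ℓ, EuclideanSpace ℝ (Fin n))) : ℝ :=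
  ∫ t in Set.Icc (0:ℝ) ℓ, ⟪φ (curveExt hℓ γ t), deriv (curveExt hℓ γ) t⟫

section Aux
open scoped NNReal
variable {n : ℕ} {ℓ : ℝ}


lemma lipschitz_curveExt (hℓ : 0 ≤ ℓ) {γ : C(Set.Icc (0:ℝ) ℓ, EuclideanSpace ℝ (Fin n))}
    (hγ : LipschitzWith 1 γ) : LipschitzWith 1 (curveExt hℓ γ) := by
  have := hγ.comp (LipschitzWith.projIcc hℓ)
  rw [mul_one] at this
  exact this

lemma dist_curveExt_le (hℓ : 0 ≤ ℓ) {γ γ' : C(Set.Icc (0:ℝ) ℓ, EuclideanSpace ℝ (Fin n))}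
    {d : ℝ} (h : ∀ s, dist (γ s) (γ' s) ≤ d) (t : ℝ) :
    dist (curveExt hℓ γ t) (curveExt hℓ γ' t) ≤ d := h _

lemma norm_deriv_curveExt_le (hℓ : 0 ≤ ℓ) {γ : C(Set.Icc (0:ℝ) ℓ, EuclideanSpace ℝ (Fin n))}
    (hγ : LipschitzWith 1 γ) (t : ℝ) : ‖deriv (curveExt hℓ γ) t‖ ≤ 1 := by
  simpa using norm_deriv_le_of_lipschitz (𝕜 := ℝ) (lipschitz_curveExt hℓ hγ)

lemma integrand_integrable (hℓ : 0 ≤ ℓ) {γ : C(Set.Icc (0:ℝ) ℓ, EuclideanSpace ℝ (Fin n))}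
    (hγ : LipschitzWith 1 γ) {ψ : EuclideanSpace ℝ (Fin n) → EuclideanSpace ℝ (Fin n)}
    (hψ : Continuous ψ) {B : ℝ} (hB : ∀ x, ‖ψ x‖ ≤ B) :
    IntegrableOn (fun t => ⟪ψ (curveExt hℓ γ t), deriv (curveExt hℓ γ) t⟫) (Icc (0:ℝ) ℓ) := by
  have hce : Continuous (curveExt hℓ γ) := (lipschitz_curveExt hℓ hγ).continuous
  have hmeas : AEStronglyMeasurable
      (fun t => ⟪ψ (curveExt hℓ γ t), deriv (curveExt hℓ γ) t⟫) (volume.restrict (Icc (0:ℝ) ℓ)) := by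
    apply AEStronglyMeasurable.inner
    · exact ((hψ.comp hce).aestronglyMeasurable).restrict
    · exact (measurable_deriv _).aestronglyMeasurable.restrict
  apply Integrable.mono' (g := fun _ => B * 1) (integrableOn_const measure_Icc_lt_top.ne) hmeas
  filter_upwards with t
  exact le_trans (norm_inner_le_norm _ _)
    (mul_le_mul (hB _) (norm_deriv_curveExt_le hℓ hγ t) (norm_nonneg _)
      (le_trans (norm_nonneg _) (hB (0:EuclideanSpace ℝ (Fin n)))))



lemma ibp_bound {ℓ : ℝ} (hℓ : 0 < ℓ) {Lψ K : ℝ≥0} {B D : ℝ}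
    {ψf δf : ℝ → EuclideanSpace ℝ (Fin n)}
    (hψ : LipschitzWith Lψ ψf) (hψB : ∀ t, ‖ψf t‖ ≤ B)
    (hδ : LipschitzWith K δf) (hδD : ∀ t, ‖δf t‖ ≤ D) :
    |∫ t in Icc (0:ℝ) ℓ, ⟪ψf t, deriv δf t⟫| ≤ Lψ * ℓ * D + 2 * B * D := by
  have hB0 : (0:ℝ) ≤ B := le_trans (norm_nonneg _) (hψB 0)
  have hD0 : (0:ℝ) ≤ D := le_trans (norm_nonneg _) (hδD 0)
  have hψc : Continuous ψf := hψ.continuous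
  have hδc : Continuous δf := hδ.continuous
  set h : ℕ → ℝ := fun k => ((k:ℝ)+1)⁻¹ with hh
  have hpos : ∀ k, 0 < h k := fun k => by positivity
  have hh0 : Filter.Tendsto h Filter.atTop (nhds 0) := by
    simpa [hh, one_div] using tendsto_one_div_add_atTop_nhds_zero_nat (𝕜 := ℝ)
  set Q : ℕ → ℝ := fun k => ∫ t in Icc (0:ℝ) ℓ, ⟪ψf t, (h k)⁻¹ • (δf (t + h k) - δf t)⟫ with hQ
  have hcont : ∀ k, Continuous (fun t => ⟪ψf t, (h k)⁻¹ • (δf (t + h k) - δf t)⟫) := by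
    intro k
    exact hψc.inner (by fun_prop)
  -- Step 1: Q tends to the integral
  have hconv : Filter.Tendsto Q Filter.atTop
      (nhds (∫ t in Icc (0:ℝ) ℓ, ⟪ψf t, deriv δf t⟫)) := by
    apply tendsto_integral_of_dominated_convergence (fun _ => B * K)
    · intro k; exact (hcont k).aestronglyMeasurable.restrict
    · exact integrableOn_const measure_Icc_lt_top.ne
    · intro k
      filter_upwards with t
      have h2 : dist (t + h k) t = h k := by
        rw [Real.dist_eq, add_sub_cancel_left, abs_of_pos (hpos k)]
      have h1 : ‖(h k)⁻¹ • (δf (t + h k) - δf t)‖ ≤ K := by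
        rw [norm_smul, Real.norm_eq_abs, abs_inv, abs_of_pos (hpos k)]
        have := hδ.dist_le_mul (t + h k) t
        rw [dist_eq_norm, h2] at this
        calc (h k)⁻¹ * ‖δf (t + h k) - δf t‖ ≤ (h k)⁻¹ * (K * h k) :=
              mul_le_mul_of_nonneg_left this (by positivity)
          _ = K := by rw [mul_comm (K:ℝ)]; exact inv_mul_cancel_left₀ (hpos k).ne' _
      calc ‖⟪ψf t, (h k)⁻¹ • (δf (t + h k) - δf t)⟫‖
          ≤ ‖ψf t‖ * ‖(h k)⁻¹ • (δf (t + h k) - δf t)‖ := norm_inner_le_norm _ _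
        _ ≤ B * K := mul_le_mul (hψB t) h1 (norm_nonneg _) hB0
    · have hae : ∀ᵐ t ∂(volume.restrict (Icc (0:ℝ) ℓ)), DifferentiableAt ℝ δf t :=
        ae_restrict_of_ae (hδ.ae_differentiableAt)
      filter_upwards [hae] with t ht
      have hd : HasDerivAt δf (deriv δf t) t := ht.hasDerivAt
      rw [hasDerivAt_iff_tendsto_slope_zero] at hd
      have hth : Filter.Tendsto h Filter.atTop (nhdsWithin 0 {(0:ℝ)}ᶜ) := by
        rw [tendsto_nhdsWithin_iff]
        exact ⟨hh0, Filter.Eventually.of_forall fun k => (hpos k).ne'⟩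
      exact Filter.Tendsto.inner tendsto_const_nhds (hd.comp hth)
  -- Step 2: uniform bound on Q k for h k ≤ ℓ
  have hbound : ∀ᶠ k in Filter.atTop, |Q k| ≤ Lψ * ℓ * D + 2 * B * D := by
    have hev : ∀ᶠ k in Filter.atTop, h k ≤ ℓ := hh0.eventually_le_const hℓ
    filter_upwards [hev] with k hk
    set r := h k with hr
    have hr0 : 0 < r := hpos k
    -- convert to interval integral
    have hQk : Q k = r⁻¹ * ((∫ t in (0:ℝ)..ℓ, ⟪ψf t, δf (t + r)⟫) - ∫ t in (0:ℝ)..ℓ, ⟪ψf t, δf t⟫) := by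
      rw [hQ]
      simp only
      rw [integral_Icc_eq_integral_Ioc, ← intervalIntegral.integral_of_le hℓ.le]
      rw [← intervalIntegral.integral_sub
        ((hψc.inner (hδc.comp (continuous_add_right r))).intervalIntegrable _ _)
        ((hψc.inner hδc).intervalIntegrable _ _),
        ← intervalIntegral.integral_const_mul]
      congr 1
      funext x
      rw [real_inner_smul_right, inner_sub_right]
    -- change of variables and splitting
    have hA : (∫ t in (0:ℝ)..ℓ, ⟪ψf t, δf (t + r)⟫) = ∫ t in r..(ℓ+r), ⟪ψf (t - r), δf t⟫ := by
      have := intervalIntegral.integral_comp_add_right (a := (0:ℝ)) (b := ℓ)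
        (fun t => ⟪ψf (t - r), δf t⟫) r
      simp only [add_sub_cancel_right, zero_add] at this
      rw [← this]
    have hGi : Continuous (fun t => ⟪ψf (t - r), δf t⟫) :=
      (hψc.comp (continuous_sub_right r)).inner hδc
    have hui : Continuous (fun t => ⟪ψf t, δf t⟫) := hψc.inner hδc
    have hsplit1 : (∫ t in r..(ℓ+r), ⟪ψf (t - r), δf t⟫)
        = (∫ t in r..ℓ, ⟪ψf (t - r), δf t⟫) + ∫ t in ℓ..(ℓ+r), ⟪ψf (t - r), δf t⟫ :=
      (intervalIntegral.integral_add_adjacent_intervals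
        (hGi.intervalIntegrable _ _) (hGi.intervalIntegrable _ _)).symm
    have hsplit2 : (∫ t in (0:ℝ)..ℓ, ⟪ψf t, δf t⟫)
        = (∫ t in (0:ℝ)..r, ⟪ψf t, δf t⟫) + ∫ t in r..ℓ, ⟪ψf t, δf t⟫ :=
      (intervalIntegral.integral_add_adjacent_intervals
        (hui.intervalIntegrable _ _) (hui.intervalIntegrable _ _)).symm
    have hdiff : (∫ t in (0:ℝ)..ℓ, ⟪ψf t, δf (t + r)⟫) - (∫ t in (0:ℝ)..ℓ, ⟪ψf t, δf t⟫)
        = (∫ t in r..ℓ, (⟪ψf (t - r), δf t⟫ - ⟪ψf t, δf t⟫))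
          + (∫ t in ℓ..(ℓ+r), ⟪ψf (t - r), δf t⟫) - ∫ t in (0:ℝ)..r, ⟪ψf t, δf t⟫ := by
      rw [hA, hsplit1, hsplit2,
        intervalIntegral.integral_sub (hGi.intervalIntegrable _ _) (hui.intervalIntegrable _ _)]
      ring
    -- bounds on the three pieces
    have hb1 : |∫ t in r..ℓ, (⟪ψf (t - r), δf t⟫ - ⟪ψf t, δf t⟫)| ≤ (Lψ * r * D) * ℓ := by
      have : ∀ t ∈ uIoc r ℓ, ‖⟪ψf (t - r), δf t⟫ - ⟪ψf t, δf t⟫‖ ≤ Lψ * r * D := by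
        intro t _
        rw [← inner_sub_left]
        calc ‖⟪ψf (t - r) - ψf t, δf t⟫‖ ≤ ‖ψf (t - r) - ψf t‖ * ‖δf t‖ := norm_inner_le_norm _ _
          _ ≤ (Lψ * r) * D := by
              apply mul_le_mul _ (hδD t) (norm_nonneg _) (by positivity)
              have := hψ.dist_le_mul (t - r) t
              rw [dist_eq_norm] at this
              have h3 : dist (t - r) t = r := by
                rw [Real.dist_eq, sub_sub_cancel_left, abs_neg, abs_of_pos hr0]
              rw [h3] at this; exact this
      calc |∫ t in r..ℓ, (⟪ψf (t - r), δf t⟫ - ⟪ψf t, δf t⟫)| ≤ Lψ * r * D * |ℓ - r| :=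
            intervalIntegral.norm_integral_le_of_norm_le_const this
        _ ≤ Lψ * r * D * ℓ := by
            apply mul_le_mul_of_nonneg_left _ (by positivity)
            rw [abs_of_nonneg (by linarith)]; linarith
    have hb2 : |∫ t in ℓ..(ℓ+r), ⟪ψf (t - r), δf t⟫| ≤ (B * D) * r := by
      have : ∀ t ∈ uIoc ℓ (ℓ+r), ‖⟪ψf (t - r), δf t⟫‖ ≤ B * D := fun t _ =>
        le_trans (norm_inner_le_norm _ _) (mul_le_mul (hψB _) (hδD t) (norm_nonneg _) hB0)
      calc |∫ t in ℓ..(ℓ+r), ⟪ψf (t - r), δf t⟫| ≤ B * D * |ℓ + r - ℓ| :=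
            intervalIntegral.norm_integral_le_of_norm_le_const this
        _ = B * D * r := by rw [add_sub_cancel_left, abs_of_pos hr0]
    have hb3 : |∫ t in (0:ℝ)..r, ⟪ψf t, δf t⟫| ≤ (B * D) * r := by
      have : ∀ t ∈ uIoc (0:ℝ) r, ‖⟪ψf t, δf t⟫‖ ≤ B * D := fun t _ =>
        le_trans (norm_inner_le_norm _ _) (mul_le_mul (hψB _) (hδD t) (norm_nonneg _) hB0)
      calc |∫ t in (0:ℝ)..r, ⟪ψf t, δf t⟫| ≤ B * D * |r - 0| :=
            intervalIntegral.norm_integral_le_of_norm_le_const this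
        _ = B * D * r := by rw [sub_zero, abs_of_pos hr0]
    set I1 := ∫ t in r..ℓ, (⟪ψf (t - r), δf t⟫ - ⟪ψf t, δf t⟫) with hI1
    set I2 := ∫ t in ℓ..(ℓ+r), ⟪ψf (t - r), δf t⟫ with hI2
    set I3 := ∫ t in (0:ℝ)..r, ⟪ψf t, δf t⟫ with hI3
    rw [hQk, abs_mul, abs_inv, abs_of_pos hr0, hdiff, inv_mul_le_iff₀ hr0]
    calc |I1 + I2 - I3| ≤ |I1 + I2| + |I3| := abs_sub _ _
      _ ≤ |I1| + |I2| + |I3| := by gcongr; exact abs_add_le _ _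
      _ ≤ (Lψ * r * D) * ℓ + (B * D) * r + (B * D) * r := by gcongr
      _ = r * (Lψ * ℓ * D + 2 * B * D) := by ring
  exact le_of_tendsto hconv.abs hbound


lemma curveAction_lipschitz_est (hℓ : 0 < ℓ) {Lψ : ℝ≥0} {B D : ℝ}
    {ψ : EuclideanSpace ℝ (Fin n) → EuclideanSpace ℝ (Fin n)}
    (hψ : LipschitzWith Lψ ψ) (hB : ∀ x, ‖ψ x‖ ≤ B)
    {γ₁ γ₂ : C(Set.Icc (0:ℝ) ℓ, EuclideanSpace ℝ (Fin n))}
    (hγ₁ : LipschitzWith 1 γ₁) (hγ₂ : LipschitzWith 1 γ₂)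
    (hD : ∀ s, dist (γ₁ s) (γ₂ s) ≤ D) :
    |curveAction hℓ.le ψ γ₁ - curveAction hℓ.le ψ γ₂| ≤ Lψ * D * ℓ + (Lψ * ℓ * D + 2 * B * D) := by
  have hB0 : (0:ℝ) ≤ B := le_trans (norm_nonneg _) (hB 0)
  have hD0 : (0:ℝ) ≤ D := le_trans dist_nonneg (hD ⟨0, by simp [hℓ.le]⟩)
  set e₁ := curveExt hℓ.le γ₁ with he₁
  set e₂ := curveExt hℓ.le γ₂ with he₂
  have hl₁ : LipschitzWith 1 e₁ := lipschitz_curveExt hℓ.le hγ₁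
  have hl₂ : LipschitzWith 1 e₂ := lipschitz_curveExt hℓ.le hγ₂
  set δf : ℝ → EuclideanSpace ℝ (Fin n) := fun t => e₁ t - e₂ t with hδf
  have hδl : LipschitzWith 2 δf := by
    have := hl₁.sub hl₂
    norm_num at this ⊢
    exact this
  have hδD : ∀ t, ‖δf t‖ ≤ D := fun t => by
    rw [hδf]; rw [← dist_eq_norm]; exact dist_curveExt_le hℓ.le hD t
  have hi₁ := integrand_integrable hℓ.le hγ₁ hψ.continuous hB
  have hi₂ := integrand_integrable hℓ.le hγ₂ hψ.continuous hB
  -- difference of actions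
  have hsub : curveAction hℓ.le ψ γ₁ - curveAction hℓ.le ψ γ₂
      = ∫ t in Icc (0:ℝ) ℓ, (⟪ψ (e₁ t), deriv e₁ t⟫ - ⟪ψ (e₂ t), deriv e₂ t⟫) := by
    rw [curveAction, curveAction, ← integral_sub hi₁ hi₂]
  -- split pointwise
  have hptwise : ∀ t, ⟪ψ (e₁ t), deriv e₁ t⟫ - ⟪ψ (e₂ t), deriv e₂ t⟫
      = ⟪ψ (e₁ t) - ψ (e₂ t), deriv e₁ t⟫ + (⟪ψ (e₂ t), deriv e₁ t⟫ - ⟪ψ (e₂ t), deriv e₂ t⟫) := by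
    intro t; rw [inner_sub_left]; ring
  have hint1 : IntegrableOn (fun t => ⟪ψ (e₁ t) - ψ (e₂ t), deriv e₁ t⟫) (Icc (0:ℝ) ℓ) := by
    have hmeas : AEStronglyMeasurable (fun t => ⟪ψ (e₁ t) - ψ (e₂ t), deriv e₁ t⟫)
        (volume.restrict (Icc (0:ℝ) ℓ)) := by
      apply AEStronglyMeasurable.inner
      · exact (((hψ.continuous.comp hl₁.continuous).sub
          (hψ.continuous.comp hl₂.continuous)).aestronglyMeasurable).restrict
      · exact (measurable_deriv _).aestronglyMeasurable.restrict
    apply Integrable.mono' (g := fun _ => 2 * B) (integrableOn_const measure_Icc_lt_top.ne) hmeas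
    filter_upwards with t
    calc ‖⟪ψ (e₁ t) - ψ (e₂ t), deriv e₁ t⟫‖ ≤ ‖ψ (e₁ t) - ψ (e₂ t)‖ * ‖deriv e₁ t‖ :=
          norm_inner_le_norm _ _
      _ ≤ (B + B) * 1 := by
          apply mul_le_mul _ (norm_deriv_curveExt_le hℓ.le hγ₁ t) (norm_nonneg _) (by linarith)
          exact le_trans (norm_sub_le _ _) (add_le_add (hB _) (hB _))
      _ = 2 * B := by ring
  have hint2 : IntegrableOn (fun t => ⟪ψ (e₂ t), deriv e₁ t⟫ - ⟪ψ (e₂ t), deriv e₂ t⟫)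
      (Icc (0:ℝ) ℓ) := by
    have h21 : IntegrableOn (fun t => ⟪ψ (e₂ t), deriv e₁ t⟫) (Icc (0:ℝ) ℓ) := by
      have hmeas : AEStronglyMeasurable (fun t => ⟪ψ (e₂ t), deriv e₁ t⟫)
          (volume.restrict (Icc (0:ℝ) ℓ)) := by
        apply AEStronglyMeasurable.inner
        · exact ((hψ.continuous.comp hl₂.continuous).aestronglyMeasurable).restrict
        · exact (measurable_deriv _).aestronglyMeasurable.restrict
      apply Integrable.mono' (g := fun _ => B * 1)
        (integrableOn_const measure_Icc_lt_top.ne) hmeas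
      filter_upwards with t
      exact le_trans (norm_inner_le_norm _ _)
        (mul_le_mul (hB _) (norm_deriv_curveExt_le hℓ.le hγ₁ t) (norm_nonneg _) hB0)
    exact h21.sub hi₂
  have hsplit : (∫ t in Icc (0:ℝ) ℓ, (⟪ψ (e₁ t), deriv e₁ t⟫ - ⟪ψ (e₂ t), deriv e₂ t⟫))
      = (∫ t in Icc (0:ℝ) ℓ, ⟪ψ (e₁ t) - ψ (e₂ t), deriv e₁ t⟫)
        + ∫ t in Icc (0:ℝ) ℓ, (⟪ψ (e₂ t), deriv e₁ t⟫ - ⟪ψ (e₂ t), deriv e₂ t⟫) := by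
    rw [← integral_add hint1 hint2]
    congr 1; funext t; exact hptwise t
  -- second integral equals the δf integral a.e.
  have hae : (∫ t in Icc (0:ℝ) ℓ, (⟪ψ (e₂ t), deriv e₁ t⟫ - ⟪ψ (e₂ t), deriv e₂ t⟫))
      = ∫ t in Icc (0:ℝ) ℓ, ⟪ψ (e₂ t), deriv δf t⟫ := by
    apply integral_congr_ae
    have h1 : ∀ᵐ t ∂(volume.restrict (Icc (0:ℝ) ℓ)), DifferentiableAt ℝ e₁ t :=
      ae_restrict_of_ae hl₁.ae_differentiableAt
    have h2 : ∀ᵐ t ∂(volume.restrict (Icc (0:ℝ) ℓ)), DifferentiableAt ℝ e₂ t :=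
      ae_restrict_of_ae hl₂.ae_differentiableAt
    filter_upwards [h1, h2] with t ht1 ht2
    rw [hδf]
    rw [deriv_fun_sub ht1 ht2, inner_sub_right]
  have hfirst : |∫ t in Icc (0:ℝ) ℓ, ⟪ψ (e₁ t) - ψ (e₂ t), deriv e₁ t⟫| ≤ Lψ * D * ℓ := by
    rw [← Real.norm_eq_abs]
    have hb : ∀ t ∈ Icc (0:ℝ) ℓ, ‖⟪ψ (e₁ t) - ψ (e₂ t), deriv e₁ t⟫‖ ≤ Lψ * D := by
      intro t _
      calc ‖⟪ψ (e₁ t) - ψ (e₂ t), deriv e₁ t⟫‖ ≤ ‖ψ (e₁ t) - ψ (e₂ t)‖ * ‖deriv e₁ t‖ :=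
            norm_inner_le_norm _ _
        _ ≤ (Lψ * D) * 1 := by
            apply mul_le_mul _ (norm_deriv_curveExt_le hℓ.le hγ₁ t) (norm_nonneg _) (by positivity)
            have := hψ.dist_le_mul (e₁ t) (e₂ t)
            rw [dist_eq_norm] at this
            exact this.trans (mul_le_mul_of_nonneg_left (dist_curveExt_le hℓ.le hD t) Lψ.2)
        _ = Lψ * D := by ring
    calc ‖∫ t in Icc (0:ℝ) ℓ, ⟪ψ (e₁ t) - ψ (e₂ t), deriv e₁ t⟫‖
        ≤ Lψ * D * (volume (Icc (0:ℝ) ℓ)).toReal :=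
          norm_setIntegral_le_of_norm_le_const measure_Icc_lt_top hb
      _ = Lψ * D * ℓ := by rw [Real.volume_Icc]; simp [ENNReal.toReal_ofReal hℓ.le]
  have hsecond : |∫ t in Icc (0:ℝ) ℓ, ⟪ψ (e₂ t), deriv δf t⟫| ≤ Lψ * ℓ * D + 2 * B * D := by
    have hψe : LipschitzWith (Lψ * 1) (fun t => ψ (e₂ t)) := hψ.comp hl₂
    rw [mul_one] at hψe
    exact ibp_bound hℓ hψe (fun t => hB _) hδl hδD
  rw [hsub, hsplit, hae]
  exact le_trans (abs_add_le _ _) (add_le_add hfirst hsecond)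



-- real-valued Lipschitz approximation of a uniformly continuous bounded function
lemma exists_lipschitz_approx_real {X : Type*} [MetricSpace X] [Nonempty X] {u : X → ℝ}
    (hu : UniformContinuous u) {B : ℝ} (hB : ∀ x, |u x| ≤ B) {ε : ℝ} (hε : 0 < ε) :
    ∃ K : ℝ≥0, ∃ v : X → ℝ, LipschitzWith K v ∧ ∀ x, |v x - u x| ≤ ε := by
  have hB0 : 0 ≤ B := le_trans (abs_nonneg _) (hB (Classical.arbitrary X))
  obtain ⟨δ, hδ0, hδ⟩ := Metric.uniformContinuous_iff.1 hu ε hε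
  set Kr : ℝ := (2 * B + 1) / δ with hKr
  have hKr0 : 0 < Kr := by positivity
  set v : X → ℝ := fun x => ⨅ y, (u y + Kr * dist x y) with hv
  have hbdd : ∀ x, BddBelow (range fun y => u y + Kr * dist x y) := by
    intro x
    refine ⟨-B, ?_⟩
    rintro _ ⟨y, rfl⟩
    have h1 := (abs_le.1 (hB y)).1
    have h2 : 0 ≤ Kr * dist x y := mul_nonneg hKr0.le dist_nonneg
    simp only []
    linarith
  have hvle : ∀ x, v x ≤ u x := by
    intro x
    have := ciInf_le (hbdd x) x
    simpa using this
  have hvge : ∀ x, u x - ε ≤ v x := by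
    intro x
    apply le_ciInf
    intro y
    rcases lt_or_ge (dist x y) δ with hd | hd
    · have h0 : |u x - u y| ≤ ε := by
        have := (hδ hd).le
        rwa [Real.dist_eq] at this
      have h1 := (abs_le.1 h0).2
      have h2 : 0 ≤ Kr * dist x y := mul_nonneg hKr0.le dist_nonneg
      linarith
    · have h1 := (abs_le.1 (hB x)).2
      have h2 := (abs_le.1 (hB y)).1
      have h3 : Kr * δ ≤ Kr * dist x y := mul_le_mul_of_nonneg_left hd hKr0.le
      have h4 : Kr * δ = 2 * B + 1 := by rw [hKr, div_mul_cancel₀ _ hδ0.ne']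
      linarith
  have hlip : LipschitzWith (Real.toNNReal Kr) v := by
    apply LipschitzWith.of_dist_le_mul
    intro x z
    have key : ∀ a b : X, v a - v b ≤ Kr * dist a b := by
      intro a b
      have : ∀ y, v a ≤ (u y + Kr * dist b y) + Kr * dist a b := by
        intro y
        calc v a ≤ u y + Kr * dist a y := ciInf_le (hbdd a) y
          _ ≤ (u y + Kr * dist b y) + Kr * dist a b := by
              have := dist_triangle a b y
              nlinarith
      have h5 : v a - Kr * dist a b ≤ v b := by
        apply le_ciInf
        intro y
        linarith [this y]
      linarith
    rw [Real.dist_eq, Real.coe_toNNReal _ hKr0.le]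
    rw [abs_sub_le_iff]
    constructor
    · exact key x z
    · rw [dist_comm x z] at *
      exact key z x
  exact ⟨_, v, hlip, fun x => by
    rw [abs_sub_le_iff]
    constructor
    · linarith [hvle x, hvge x]
    · linarith [hvle x, hvge x]⟩

lemma coord_abs_le_norm {n : ℕ} (x : EuclideanSpace ℝ (Fin n)) (j : Fin n) : |x j| ≤ ‖x‖ := by
  rw [EuclideanSpace.norm_eq]
  have h1 : |x j| = Real.sqrt (‖x j‖^2) := by
    rw [Real.sqrt_sq_eq_abs, Real.norm_eq_abs, abs_abs]
  rw [h1]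
  apply Real.sqrt_le_sqrt
  apply Finset.single_le_sum (f := fun i => ‖x i‖^2) (fun i _ => by positivity) (Finset.mem_univ j)

lemma exists_lipschitz_approx {n : ℕ} {φ : EuclideanSpace ℝ (Fin n) → EuclideanSpace ℝ (Fin n)}
    (hφ : Continuous φ) (hφc : HasCompactSupport φ) {ε : ℝ} (hε : 0 < ε) :
    ∃ K : ℝ≥0, ∃ ψ : EuclideanSpace ℝ (Fin n) → EuclideanSpace ℝ (Fin n),
      LipschitzWith K ψ ∧ ∀ x, ‖ψ x - φ x‖ ≤ ε := by
  obtain ⟨B, hBφ⟩ := hφ.bounded_above_of_compact_support hφc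
  have hUC : UniformContinuous φ := hφc.uniformContinuous_of_continuous hφ
  set ε' : ℝ := ε / (n + 1) with hε'
  have hε'0 : 0 < ε' := by positivity
  have hu : ∀ j : Fin n, UniformContinuous (fun x => φ x j) := fun j =>
    (EuclideanSpace.proj (𝕜 := ℝ) j).uniformContinuous.comp hUC
  have hub : ∀ j : Fin n, ∀ x, |φ x j| ≤ B := fun j x =>
    le_trans (coord_abs_le_norm _ j) (hBφ x)
  choose K v hK hv using fun j : Fin n =>
    exists_lipschitz_approx_real (hu j) (hub j) hε'0
  set Km : ℝ≥0 := Finset.univ.sup K with hKm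
  have hKle : ∀ j, K j ≤ Km := fun j => Finset.le_sup (Finset.mem_univ j)
  set ψ : EuclideanSpace ℝ (Fin n) → EuclideanSpace ℝ (Fin n) :=
    fun x => (WithLp.equiv 2 (Fin n → ℝ)).symm (fun j => v j x) with hψ
  have happ : ∀ (x : EuclideanSpace ℝ (Fin n)) (j : Fin n), ψ x j = v j x := fun x j => rfl
  refine ⟨(n+1 : ℝ≥0) * Km, ψ, ?_, ?_⟩
  · apply LipschitzWith.of_dist_le_mul
    intro x z
    have h1 : dist (ψ x) (ψ z) ≤ Real.sqrt (n * (Km * dist x z)^2) := by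
      rw [EuclideanSpace.dist_eq]
      apply Real.sqrt_le_sqrt
      calc ∑ i, dist (ψ x i) (ψ z i) ^ 2 ≤ ∑ _i : Fin n, (Km * dist x z)^2 := by
            apply Finset.sum_le_sum
            intro i _
            apply pow_le_pow_left₀ dist_nonneg
            rw [happ, happ]
            calc dist (v i x) (v i z) ≤ K i * dist x z := (hK i).dist_le_mul x z
              _ ≤ Km * dist x z := by
                  apply mul_le_mul_of_nonneg_right _ dist_nonneg
                  exact_mod_cast hKle i
        _ = n * (Km * dist x z)^2 := by simp [Finset.sum_const, Finset.card_univ]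
    refine h1.trans ?_
    have h2 : Real.sqrt (n * (Km * dist x z)^2) = Real.sqrt n * (Km * dist x z) := by
      rw [Real.sqrt_mul (by positivity), Real.sqrt_sq (by positivity)]
    rw [h2]
    have h3 : Real.sqrt n ≤ n + 1 := by
      rw [show ((n:ℝ)+1) = Real.sqrt ((n+1)^2) by rw [Real.sqrt_sq (by positivity)]]
      apply Real.sqrt_le_sqrt; nlinarith [sq_nonneg (n:ℝ)]
    calc Real.sqrt n * (Km * dist x z) ≤ (n+1) * (Km * dist x z) :=
          mul_le_mul_of_nonneg_right h3 (by positivity)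
      _ = ((n+1 : ℝ≥0) * Km : ℝ≥0) * dist x z := by push_cast; ring
  · intro x
    have h1 : ‖ψ x - φ x‖ ≤ Real.sqrt (n * ε'^2) := by
      rw [EuclideanSpace.norm_eq]
      apply Real.sqrt_le_sqrt
      calc ∑ i, ‖(ψ x - φ x) i‖ ^ 2 ≤ ∑ _i : Fin n, ε'^2 := by
            apply Finset.sum_le_sum
            intro i _
            have : (ψ x - φ x) i = v i x - φ x i := rfl
            rw [this, Real.norm_eq_abs]
            apply pow_le_pow_left₀ (abs_nonneg _) (hv i x)
        _ = n * ε'^2 := by simp [Finset.sum_const, Finset.card_univ]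
    refine h1.trans ?_
    have h2 : Real.sqrt (n * ε'^2) = Real.sqrt n * ε' := by
      rw [Real.sqrt_mul (by positivity), Real.sqrt_sq hε'0.le]
    rw [h2]
    have h3 : Real.sqrt n ≤ n + 1 := by
      rw [show ((n:ℝ)+1) = Real.sqrt ((n+1)^2) by rw [Real.sqrt_sq (by positivity)]]
      apply Real.sqrt_le_sqrt; nlinarith [sq_nonneg (n:ℝ)]
    calc Real.sqrt n * ε' ≤ (n+1) * ε' := mul_le_mul_of_nonneg_right h3 hε'0.le
      _ = ε := by rw [hε']; field_simp

lemma curveAction_modulus (hℓ : 0 < ℓ)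
    {φ : EuclideanSpace ℝ (Fin n) → EuclideanSpace ℝ (Fin n)}
    (hφ : Continuous φ) (hφc : HasCompactSupport φ) {ε : ℝ} (hε : 0 < ε) :
    ∃ δ : ℝ, 0 < δ ∧ ∀ γ₁ γ₂ : C(Set.Icc (0:ℝ) ℓ, EuclideanSpace ℝ (Fin n)),
      LipschitzWith 1 γ₁ → LipschitzWith 1 γ₂ → (∀ s, dist (γ₁ s) (γ₂ s) ≤ δ) →
      |curveAction hℓ.le φ γ₁ - curveAction hℓ.le φ γ₂| ≤ ε := by
  obtain ⟨Bφ, hBφ⟩ := hφ.bounded_above_of_compact_support hφc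
  have hBφ0 : 0 ≤ Bφ := le_trans (norm_nonneg _) (hBφ 0)
  set ε₁ : ℝ := ε / (4 * (ℓ + 1)) with hε₁
  have hε₁0 : 0 < ε₁ := by positivity
  obtain ⟨K, ψ, hK, hψφ⟩ := exists_lipschitz_approx hφ hφc hε₁0
  have hBψ : ∀ x, ‖ψ x‖ ≤ Bφ + ε₁ := fun x => by
    calc ‖ψ x‖ = ‖(ψ x - φ x) + φ x‖ := by rw [sub_add_cancel]
      _ ≤ ‖ψ x - φ x‖ + ‖φ x‖ := norm_add_le _ _
      _ ≤ ε₁ + Bφ := add_le_add (hψφ x) (hBφ x)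
      _ = Bφ + ε₁ := by ring
  set M : ℝ := 2 * K * ℓ + 2 * (Bφ + ε₁) with hM
  have hM0 : 0 ≤ M := by positivity
  set δ : ℝ := min 1 (ε / (2 * (M + 1))) with hδdef
  have hδ0 : 0 < δ := lt_min one_pos (by positivity)
  refine ⟨δ, hδ0, ?_⟩
  intro γ₁ γ₂ hγ₁ hγ₂ hdist
  -- comparison of the two actions
  have hcmp : ∀ (γ : C(Set.Icc (0:ℝ) ℓ, EuclideanSpace ℝ (Fin n))), LipschitzWith 1 γ →
      |curveAction hℓ.le φ γ - curveAction hℓ.le ψ γ| ≤ ε₁ * ℓ := by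
    intro γ hγ
    have hi1 := integrand_integrable hℓ.le hγ hφ hBφ
    have hi2 := integrand_integrable hℓ.le hγ hK.continuous hBψ
    have hsub : curveAction hℓ.le φ γ - curveAction hℓ.le ψ γ
        = ∫ t in Icc (0:ℝ) ℓ,
            (⟪φ (curveExt hℓ.le γ t), deriv (curveExt hℓ.le γ) t⟫
              - ⟪ψ (curveExt hℓ.le γ t), deriv (curveExt hℓ.le γ) t⟫) := by
      rw [curveAction, curveAction, ← integral_sub hi1 hi2]
    rw [hsub, ← Real.norm_eq_abs]
    have hb : ∀ t ∈ Icc (0:ℝ) ℓ,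
        ‖⟪φ (curveExt hℓ.le γ t), deriv (curveExt hℓ.le γ) t⟫
          - ⟪ψ (curveExt hℓ.le γ t), deriv (curveExt hℓ.le γ) t⟫‖ ≤ ε₁ := by
      intro t _
      rw [← inner_sub_left]
      calc ‖⟪φ (curveExt hℓ.le γ t) - ψ (curveExt hℓ.le γ t), deriv (curveExt hℓ.le γ) t⟫‖
          ≤ ‖φ (curveExt hℓ.le γ t) - ψ (curveExt hℓ.le γ t)‖ * ‖deriv (curveExt hℓ.le γ) t‖ :=
            norm_inner_le_norm _ _
        _ ≤ ε₁ * 1 := mul_le_mul (by rw [norm_sub_rev]; exact hψφ _)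
            (norm_deriv_curveExt_le hℓ.le hγ t) (norm_nonneg _) hε₁0.le
        _ = ε₁ := mul_one _
    calc ‖∫ t in Icc (0:ℝ) ℓ,
            (⟪φ (curveExt hℓ.le γ t), deriv (curveExt hℓ.le γ) t⟫
              - ⟪ψ (curveExt hℓ.le γ t), deriv (curveExt hℓ.le γ) t⟫)‖
        ≤ ε₁ * (volume (Icc (0:ℝ) ℓ)).toReal :=
          norm_setIntegral_le_of_norm_le_const measure_Icc_lt_top hb
      _ = ε₁ * ℓ := by rw [Real.volume_Icc]; simp [ENNReal.toReal_ofReal hℓ.le]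
  have hest := curveAction_lipschitz_est hℓ hK hBψ hγ₁ hγ₂ hdist
  have hMδ : |curveAction hℓ.le ψ γ₁ - curveAction hℓ.le ψ γ₂| ≤ M * δ := by
    refine hest.trans ?_
    rw [hM]; ring_nf
    apply le_of_eq; ring
  have h1 := hcmp γ₁ hγ₁
  have h2 := hcmp γ₂ hγ₂
  have hε₁ℓ : ε₁ * ℓ ≤ ε / 4 := by
    rw [hε₁, div_mul_eq_mul_div, div_le_div_iff₀ (by positivity) (by norm_num : (0:ℝ) < 4)]
    nlinarith [hε.le, hℓ.le]
  have hMδ2 : M * δ ≤ ε / 2 := by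
    have hδle : δ ≤ ε / (2 * (M + 1)) := min_le_right _ _
    have h3 := mul_le_mul_of_nonneg_left hδle hM0
    refine h3.trans ?_
    rw [mul_div_assoc', div_le_div_iff₀ (by positivity) (by norm_num : (0:ℝ) < 2)]
    nlinarith [hε.le]
  calc |curveAction hℓ.le φ γ₁ - curveAction hℓ.le φ γ₂|
      ≤ |curveAction hℓ.le φ γ₁ - curveAction hℓ.le ψ γ₁|
        + |curveAction hℓ.le ψ γ₁ - curveAction hℓ.le φ γ₂| := abs_sub_le _ _ _
    _ ≤ |curveAction hℓ.le φ γ₁ - curveAction hℓ.le ψ γ₁|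
        + (|curveAction hℓ.le ψ γ₁ - curveAction hℓ.le ψ γ₂|
          + |curveAction hℓ.le ψ γ₂ - curveAction hℓ.le φ γ₂|) := by
        have := abs_sub_le (curveAction hℓ.le ψ γ₁) (curveAction hℓ.le ψ γ₂)
          (curveAction hℓ.le φ γ₂)
        linarith
    _ ≤ ε / 4 + (ε / 2 + ε / 4) := by
        have h2' : |curveAction hℓ.le ψ γ₂ - curveAction hℓ.le φ γ₂| ≤ ε₁ * ℓ := by
          rw [abs_sub_comm]; exact h2
        gcongr <;> [exact h1.trans hε₁ℓ; exact hMδ.trans hMδ2; exact h2'.trans hε₁ℓ]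
    _ = ε := by ring

lemma curveAction_cont (hℓ : 0 < ℓ)
    {φ : EuclideanSpace ℝ (Fin n) → EuclideanSpace ℝ (Fin n)}
    (hφ : Continuous φ) (hφc : HasCompactSupport φ) :
    Continuous (fun γ : {γ : C(Set.Icc (0:ℝ) ℓ, EuclideanSpace ℝ (Fin n)) //
        LipschitzWith 1 γ} => curveAction hℓ.le φ γ.1) := by
  rw [Metric.continuous_iff]
  intro a ε hε
  obtain ⟨δ, hδ0, hmod⟩ := curveAction_modulus hℓ hφ hφc (half_pos hε)
  refine ⟨δ, hδ0, fun b hb => ?_⟩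
  have hd : ∀ s, dist (b.1 s) (a.1 s) ≤ δ := fun s =>
    le_trans (ContinuousMap.dist_apply_le_dist s) hb.le
  have := hmod b.1 a.1 b.2 a.2 hd
  rw [Real.dist_eq]
  exact lt_of_le_of_lt this (half_lt_self hε)



lemma dist_le_of_mem_Icc (hℓ : 0 ≤ ℓ) (s t : Set.Icc (0:ℝ) ℓ) : dist s t ≤ ℓ := by
  rw [Subtype.dist_eq, Real.dist_eq, abs_sub_le_iff]
  constructor <;> linarith [s.2.1, s.2.2, t.2.1, t.2.2]

noncomputable abbrev opc {n : ℕ} : EuclideanSpace ℝ (Fin n) → OnePoint (EuclideanSpace ℝ (Fin n)) :=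
  fun x => (x : OnePoint (EuclideanSpace ℝ (Fin n)))

lemma closure_char (hℓ : 0 < ℓ)
    {g : C(Set.Icc (0:ℝ) ℓ, OnePoint (EuclideanSpace ℝ (Fin n)))}
    (hg : g ∈ closure {g : C(Set.Icc (0:ℝ) ℓ, OnePoint (EuclideanSpace ℝ (Fin n))) |
      ∃ γ : C(Set.Icc (0:ℝ) ℓ, EuclideanSpace ℝ (Fin n)),
      LipschitzWith 1 γ ∧ g = ContinuousMap.comp ⟨(↑·), OnePoint.continuous_coe⟩ γ}) :
    (∃ γ : C(Set.Icc (0:ℝ) ℓ, EuclideanSpace ℝ (Fin n)), LipschitzWith 1 γ ∧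
      g = ContinuousMap.comp ⟨(↑·), OnePoint.continuous_coe⟩ γ) ∨
      g = ContinuousMap.const _ (∞ : OnePoint (EuclideanSpace ℝ (Fin n))) := by
  by_cases hfin : ∀ s, g s ≠ ∞
  · left
    have hrange : ∀ s, ∃ x : EuclideanSpace ℝ (Fin n), g s = ↑x := by
      intro s
      obtain ⟨x, hx⟩ := OnePoint.ne_infty_iff_exists.1 (hfin s)
      exact ⟨x, hx.symm⟩
    choose γ₀ hγ₀ using hrange
    have hcont : Continuous γ₀ := by
      rw [OnePoint.isOpenEmbedding_coe.isEmbedding.continuous_iff]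
      have : ((fun x : EuclideanSpace ℝ (Fin n) => (↑x : OnePoint _)) ∘ γ₀) = g :=
        funext fun s => (hγ₀ s).symm
      rw [this]; exact g.continuous
    have hlip : LipschitzWith 1 (⟨γ₀, hcont⟩ : C(Set.Icc (0:ℝ) ℓ, EuclideanSpace ℝ (Fin n))) := by
      apply LipschitzWith.of_dist_le_mul
      intro s t
      simp only [ContinuousMap.coe_mk, NNReal.coe_one, one_mul]
      apply le_of_forall_pos_le_add
      intro ε hε
      set O : Set C(Set.Icc (0:ℝ) ℓ, OnePoint (EuclideanSpace ℝ (Fin n))) :=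
        ((fun h => h s) ⁻¹' (opc '' Metric.ball (γ₀ s) (ε/2))) ∩
        ((fun h => h t) ⁻¹' (opc '' Metric.ball (γ₀ t) (ε/2))) with hO
      have hOopen : IsOpen O := by
        apply IsOpen.inter
        · exact (OnePoint.isOpenEmbedding_coe.isOpenMap _ Metric.isOpen_ball).preimage
            (continuous_eval_const s)
        · exact (OnePoint.isOpenEmbedding_coe.isOpenMap _ Metric.isOpen_ball).preimage
            (continuous_eval_const t)
      have hgO : g ∈ O := by
        constructor
        · exact ⟨γ₀ s, Metric.mem_ball_self (by positivity), (hγ₀ s).symm⟩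
        · exact ⟨γ₀ t, Metric.mem_ball_self (by positivity), (hγ₀ t).symm⟩
      obtain ⟨h, hhO, γ', hγ'lip, rfl⟩ := _root_.mem_closure_iff.1 hg O hOopen hgO
      obtain ⟨⟨xs, hxs, hxs2⟩, ⟨xt, hxt, hxt2⟩⟩ := hhO
      have hs' : γ' s ∈ Metric.ball (γ₀ s) (ε/2) := by
        have h5 : opc xs = opc (γ' s) := hxs2
        rwa [← OnePoint.coe_injective h5]
      have ht' : γ' t ∈ Metric.ball (γ₀ t) (ε/2) := by
        have h5 : opc xt = opc (γ' t) := hxt2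
        rwa [← OnePoint.coe_injective h5]
      have hd : dist (γ' s) (γ' t) ≤ dist s t := by
        have := hγ'lip.dist_le_mul s t
        simpa using this
      calc dist (γ₀ s) (γ₀ t)
          ≤ dist (γ₀ s) (γ' s) + dist (γ' s) (γ' t) + dist (γ' t) (γ₀ t) :=
            dist_triangle4 _ _ _ _
        _ ≤ ε/2 + dist s t + ε/2 := by
            have h1 := Metric.mem_ball.1 hs'
            have h2 := Metric.mem_ball.1 ht'
            rw [dist_comm (γ₀ s) (γ' s)]
            exact add_le_add (add_le_add h1.le hd) h2.le
        _ = dist s t + ε := by ring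
    exact ⟨⟨γ₀, hcont⟩, hlip, ContinuousMap.ext fun s => hγ₀ s⟩
  · right
    push_neg at hfin
    obtain ⟨t₀, ht₀⟩ := hfin
    ext s
    simp only [ContinuousMap.const_apply]
    by_contra hs
    obtain ⟨x, hx'⟩ := OnePoint.ne_infty_iff_exists.1 hs
    have hx : g s = opc x := hx'.symm
    set R : ℝ := ‖x‖ + 1 + ℓ with hR
    set O : Set C(Set.Icc (0:ℝ) ℓ, OnePoint (EuclideanSpace ℝ (Fin n))) :=
      ((fun h => h t₀) ⁻¹' ((opc '' Metric.closedBall (0:EuclideanSpace ℝ (Fin n)) R)ᶜ)) ∩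
      ((fun h => h s) ⁻¹' (opc '' Metric.ball x 1)) with hO
    have hOopen : IsOpen O := by
      apply IsOpen.inter
      · apply IsOpen.preimage (continuous_eval_const t₀)
        rw [isOpen_compl_iff]
        exact OnePoint.isClosed_image_coe.2 ⟨Metric.isClosed_closedBall, isCompact_closedBall _ _⟩
      · exact (OnePoint.isOpenEmbedding_coe.isOpenMap _ Metric.isOpen_ball).preimage
          (continuous_eval_const s)
    have hgO : g ∈ O := by
      constructor
      · simp only [mem_preimage, ht₀, mem_compl_iff]
        exact OnePoint.infty_notMem_image_coe
      · exact ⟨x, Metric.mem_ball_self one_pos, hx.symm⟩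
    obtain ⟨h, hhO, γ', hγ'lip, rfl⟩ := _root_.mem_closure_iff.1 hg O hOopen hgO
    obtain ⟨h1, ⟨xs, hxs, hxs2⟩⟩ := hhO
    have hs' : γ' s ∈ Metric.ball x 1 := by
      have h5 : opc xs = opc (γ' s) := hxs2
      rwa [← OnePoint.coe_injective h5]
    have ht₀' : γ' t₀ ∉ Metric.closedBall (0:EuclideanSpace ℝ (Fin n)) R := by
      intro hmem
      exact h1 ⟨γ' t₀, hmem, rfl⟩
    rw [Metric.mem_closedBall, not_le] at ht₀'
    have hd : dist (γ' t₀) (γ' s) ≤ ℓ := by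
      have h2 := hγ'lip.dist_le_mul t₀ s
      simp only [NNReal.coe_one, one_mul] at h2
      exact h2.trans (dist_le_of_mem_Icc hℓ.le t₀ s)
    have : ‖γ' t₀‖ ≤ ℓ + 1 + ‖x‖ := by
      have h3 : dist (γ' s) x ≤ 1 := (Metric.mem_ball.1 hs').le
      calc ‖γ' t₀‖ = dist (γ' t₀) 0 := by rw [dist_zero_right]
        _ ≤ dist (γ' t₀) (γ' s) + dist (γ' s) x + dist x 0 := dist_triangle4 _ _ _ _
        _ ≤ ℓ + 1 + ‖x‖ := by rw [dist_zero_right]; exact add_le_add (add_le_add hd h3) le_rfl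
    rw [dist_zero_right, hR] at ht₀'
    linarith

end Aux

/-- for a continuous compactly supported vector field `φ`, the map
`γ ↦ ⟨[γ], φ⟩` is continuous on `K_ℓ` (uniform norm), and it extends continuously to the
compactification `K̂_ℓ` with value `0` at the constant curve `∞`. -/
theorem curveAction_continuous {n : ℕ} (ℓ : ℝ) (hℓ : 0 < ℓ)
    (φ : EuclideanSpace ℝ (Fin n) → EuclideanSpace ℝ (Fin n))
    (hφ : Continuous φ) (hφc : HasCompactSupport φ) :
    Continuous (fun γ : {γ : C(Set.Icc (0:ℝ) ℓ, EuclideanSpace ℝ (Fin n)) //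
        LipschitzWith 1 γ} => curveAction hℓ.le φ γ.1) ∧
    (let i : C(EuclideanSpace ℝ (Fin n), OnePoint (EuclideanSpace ℝ (Fin n))) :=
        ⟨(↑·), OnePoint.continuous_coe⟩
      let S : Set C(Set.Icc (0:ℝ) ℓ, OnePoint (EuclideanSpace ℝ (Fin n))) :=
        {g | ∃ γ : C(Set.Icc (0:ℝ) ℓ, EuclideanSpace ℝ (Fin n)),
          LipschitzWith 1 γ ∧ g = i.comp γ}
      ∃ F : C(Set.Icc (0:ℝ) ℓ, OnePoint (EuclideanSpace ℝ (Fin n))) → ℝ,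
        ContinuousOn F (closure S) ∧
        (∀ γ : C(Set.Icc (0:ℝ) ℓ, EuclideanSpace ℝ (Fin n)), LipschitzWith 1 γ →
          F (i.comp γ) = curveAction hℓ.le φ γ) ∧
        F (ContinuousMap.const _ (∞ : OnePoint (EuclideanSpace ℝ (Fin n)))) = 0) := by
  classical
  refine ⟨curveAction_cont hℓ hφ hφc, ?_⟩
  intro i S
  obtain ⟨R, hR⟩ := hφc.isBounded.subset_closedBall (0 : EuclideanSpace ℝ (Fin n))
  set F : C(Set.Icc (0:ℝ) ℓ, OnePoint (EuclideanSpace ℝ (Fin n))) → ℝ := fun g =>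
    if h : ∃ γ : C(Set.Icc (0:ℝ) ℓ, EuclideanSpace ℝ (Fin n)),
        LipschitzWith 1 γ ∧ g = i.comp γ then curveAction hℓ.le φ h.choose else 0 with hF
  have hp0 : (0:ℝ) ∈ Set.Icc (0:ℝ) ℓ := ⟨le_refl 0, hℓ.le⟩
  have hicomp : ∀ (γ : C(Set.Icc (0:ℝ) ℓ, EuclideanSpace ℝ (Fin n))) s,
      (i.comp γ) s = opc (γ s) := fun γ s => rfl
  have hinj : ∀ γ γ' : C(Set.Icc (0:ℝ) ℓ, EuclideanSpace ℝ (Fin n)),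
      i.comp γ = i.comp γ' → γ = γ' := by
    intro γ γ' h
    refine ContinuousMap.ext fun s => ?_
    have h1 : (i.comp γ) s = (i.comp γ') s := by rw [h]
    rw [hicomp, hicomp] at h1
    exact OnePoint.coe_injective h1
  have hFS : ∀ γ : C(Set.Icc (0:ℝ) ℓ, EuclideanSpace ℝ (Fin n)), LipschitzWith 1 γ →
      F (i.comp γ) = curveAction hℓ.le φ γ := by
    intro γ hγ
    have hex : ∃ γ' : C(Set.Icc (0:ℝ) ℓ, EuclideanSpace ℝ (Fin n)),
        LipschitzWith 1 γ' ∧ i.comp γ = i.comp γ' := ⟨γ, hγ, rfl⟩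
    rw [hF]
    simp only [dif_pos hex]
    congr 1
    exact (hinj _ _ hex.choose_spec.2).symm
  have hSchar : ∀ g ∈ closure S,
      (∃ γ : C(Set.Icc (0:ℝ) ℓ, EuclideanSpace ℝ (Fin n)), LipschitzWith 1 γ ∧ g = i.comp γ) ∨
        g = ContinuousMap.const _ (∞ : OnePoint (EuclideanSpace ℝ (Fin n))) := by
    intro g hg
    exact closure_char hℓ hg
  have hFinf : F (ContinuousMap.const _ (∞ : OnePoint (EuclideanSpace ℝ (Fin n)))) = 0 := by
    rw [hF]
    apply dif_neg
    rintro ⟨γ, hγ, hc⟩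
    have h1 : (ContinuousMap.const (Set.Icc (0:ℝ) ℓ)
        (∞ : OnePoint (EuclideanSpace ℝ (Fin n)))) ⟨0, hp0⟩ = (i.comp γ) ⟨0, hp0⟩ := by rw [hc]
    rw [hicomp] at h1
    exact OnePoint.infty_ne_coe _ h1
  refine ⟨F, ?_, hFS, hFinf⟩
  -- continuity on the closure
  intro x hx
  rcases hSchar x hx with ⟨γ, hγ, rfl⟩ | rfl
  · -- continuity at a finite curve
    rw [ContinuousWithinAt, Metric.tendsto_nhds]
    intro ε hε
    obtain ⟨δ, hδ0, hmod⟩ := curveAction_modulus hℓ hφ hφc (half_pos hε)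
    obtain ⟨N, hN⟩ := exists_nat_gt (ℓ / (δ/4))
    have hN1 : 1 ≤ N := by
      rcases Nat.eq_zero_or_pos N with h0 | h
      · subst h0
        simp only [Nat.cast_zero] at hN
        nlinarith [div_pos hℓ (show (0:ℝ) < δ/4 by positivity)]
      · exact h
    have hN0' : (0:ℝ) < N := by exact_mod_cast hN1
    have hℓN : ℓ / N < δ/4 := by
      rw [div_lt_iff₀ hN0']
      rw [div_lt_iff₀ (by positivity : (0:ℝ) < δ/4)] at hN
      nlinarith
    have hptmem : ∀ j : Fin N, (j:ℝ) * ℓ / N ∈ Set.Icc (0:ℝ) ℓ := by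
      intro j
      constructor
      · positivity
      · rw [div_le_iff₀ hN0']
        have : (j:ℝ) ≤ N := by
          have := j.2
          exact_mod_cast this.le
        nlinarith
    set pt : Fin N → Set.Icc (0:ℝ) ℓ := fun j => ⟨(j:ℝ) * ℓ / N, hptmem j⟩ with hpt
    set Kj : Fin N → Set (Set.Icc (0:ℝ) ℓ) := fun j =>
      {s | (s:ℝ) ∈ Set.Icc ((j:ℝ) * ℓ / N) (((j:ℝ)+1) * ℓ / N)} with hKj
    have hKcompact : ∀ j, IsCompact (Kj j) := by
      intro j
      apply IsClosed.isCompact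
      exact (isClosed_Icc.preimage continuous_subtype_val)
    have cover : ∀ s : Set.Icc (0:ℝ) ℓ, ∃ j : Fin N, s ∈ Kj j := by
      intro s
      obtain ⟨hs0, hsℓ⟩ := s.2
      set c : ℝ := (s:ℝ) * N / ℓ with hc
      have hc0 : 0 ≤ c := by positivity
      set jn : ℕ := min (Nat.floor c) (N-1) with hjn
      have hjnN : jn < N := by omega
      have hjc : (jn:ℝ) ≤ c := by
        have h1 : (jn:ℕ) ≤ Nat.floor c := min_le_left _ _
        calc (jn:ℝ) ≤ (Nat.floor c : ℝ) := by exact_mod_cast h1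
          _ ≤ c := Nat.floor_le hc0
      refine ⟨⟨jn, hjnN⟩, ?_, ?_⟩
      · show ((⟨jn, hjnN⟩ : Fin N):ℝ) * ℓ / N ≤ (s:ℝ)
        rw [div_le_iff₀ hN0']
        rw [hc, le_div_iff₀ hℓ] at hjc
        push_cast
        nlinarith
      · show (s:ℝ) ≤ (((⟨jn, hjnN⟩ : Fin N):ℝ)+1) * ℓ / N
        rcases le_or_gt (Nat.floor c) (N-1) with hcase | hcase
        · have hjn' : jn = Nat.floor c := min_eq_left hcase
          have h2 : c < (jn:ℝ) + 1 := by
            rw [hjn']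
            exact_mod_cast Nat.lt_floor_add_one c
          rw [le_div_iff₀ hN0']
          rw [hc, div_lt_iff₀ hℓ] at h2
          push_cast
          nlinarith
        · have hjn' : jn = N-1 := min_eq_right (by omega)
          have hcast : ((⟨jn, hjnN⟩ : Fin N):ℝ) + 1 = N := by
            show ((jn:ℕ):ℝ) + 1 = N
            rw [hjn']
            have : ((N-1:ℕ):ℝ) = (N:ℝ) - 1 := by
              push_cast [Nat.cast_sub hN1]; ring
            rw [this]; ring
          rw [le_div_iff₀ hN0', hcast]
          nlinarith
    set U : Set C(Set.Icc (0:ℝ) ℓ, OnePoint (EuclideanSpace ℝ (Fin n))) :=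
      ⋂ j : Fin N, {h | Set.MapsTo h (Kj j) (opc '' Metric.ball (γ (pt j)) (δ/2))} with hU
    have hUopen : IsOpen U := by
      apply isOpen_iInter_of_finite
      intro j
      exact ContinuousMap.isOpen_setOf_mapsTo (hKcompact j)
        (OnePoint.isOpenEmbedding_coe.isOpenMap _ Metric.isOpen_ball)
    have hwidth : ∀ (j : Fin N), ∀ s ∈ Kj j, dist s (pt j) ≤ ℓ / N := by
      intro j s hs
      obtain ⟨h1, h2⟩ := hs
      rw [Subtype.dist_eq, Real.dist_eq, abs_sub_le_iff]
      constructor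
      · show (s:ℝ) - (j:ℝ) * ℓ / N ≤ ℓ / N
        have : ((j:ℝ)+1) * ℓ / N = (j:ℝ) * ℓ / N + ℓ / N := by ring
        rw [this] at h2
        linarith
      · show (j:ℝ) * ℓ / N - (s:ℝ) ≤ ℓ / N
        have h3 : (0:ℝ) ≤ ℓ / N := by positivity
        linarith
    have hxU : i.comp γ ∈ U := by
      rw [hU, mem_iInter]
      intro j s hs
      refine ⟨γ s, ?_, rfl⟩
      rw [Metric.mem_ball]
      calc dist (γ s) (γ (pt j)) ≤ dist s (pt j) := by
            have := hγ.dist_le_mul s (pt j)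
            simpa using this
        _ ≤ ℓ / N := hwidth j s hs
        _ < δ/2 := by linarith
    have hkey : ∀ h ∈ U ∩ closure S, ∃ γ' : C(Set.Icc (0:ℝ) ℓ, EuclideanSpace ℝ (Fin n)),
        LipschitzWith 1 γ' ∧ h = i.comp γ' ∧ ∀ s, dist (γ' s) (γ s) ≤ δ := by
      rintro h ⟨hhU, hhcl⟩
      rcases hSchar h hhcl with ⟨γ', hγ', rfl⟩ | rfl
      · refine ⟨γ', hγ', rfl, ?_⟩
        intro s
        obtain ⟨j, hj⟩ := cover s
        have h1 := (mem_iInter.1 hhU j) hj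
        obtain ⟨y, hy, hy2⟩ := h1
        have h2 : γ' s ∈ Metric.ball (γ (pt j)) (δ/2) := by
          have h5 : opc y = opc (γ' s) := hy2
          rwa [← OnePoint.coe_injective h5]
        calc dist (γ' s) (γ s) ≤ dist (γ' s) (γ (pt j)) + dist (γ (pt j)) (γ s) :=
              dist_triangle _ _ _
          _ ≤ δ/2 + δ/4 := by
              apply add_le_add (Metric.mem_ball.1 h2).le
              calc dist (γ (pt j)) (γ s) ≤ dist (pt j) s := by
                    have := hγ.dist_le_mul (pt j) s
                    simpa using this
                _ ≤ ℓ / N := by rw [dist_comm]; exact hwidth j s hj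
                _ ≤ δ/4 := hℓN.le
          _ ≤ δ := by linarith
      · exfalso
        obtain ⟨j, hj⟩ := cover ⟨0, hp0⟩
        have h1 := (mem_iInter.1 hhU j) hj
        obtain ⟨y, _, hy2⟩ := h1
        exact OnePoint.infty_ne_coe y hy2.symm
    have hevent : ∀ᶠ h in nhdsWithin (i.comp γ) (closure S),
        dist (F h) (F (i.comp γ)) < ε := by
      rw [Filter.eventually_iff, mem_nhdsWithin]
      refine ⟨U, hUopen, hxU, ?_⟩
      rintro h hh
      obtain ⟨γ', hγ', rfl, hclose⟩ := hkey h hh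
      simp only [mem_setOf_eq]
      rw [hFS γ' hγ', hFS γ hγ, Real.dist_eq]
      exact lt_of_le_of_lt (hmod γ' γ hγ' hγ hclose) (half_lt_self hε)
    exact hevent
  · -- continuity at the constant ∞ curve
    set V : Set C(Set.Icc (0:ℝ) ℓ, OnePoint (EuclideanSpace ℝ (Fin n))) :=
      (fun h => h ⟨0, hp0⟩) ⁻¹'
        ((opc '' Metric.closedBall (0:EuclideanSpace ℝ (Fin n)) (R+ℓ))ᶜ) with hV
    have hVopen : IsOpen V := by
      apply IsOpen.preimage (continuous_eval_const _)
      rw [isOpen_compl_iff]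
      exact OnePoint.isClosed_image_coe.2 ⟨Metric.isClosed_closedBall, isCompact_closedBall _ _⟩
    have hxV : (ContinuousMap.const (Set.Icc (0:ℝ) ℓ)
        (∞ : OnePoint (EuclideanSpace ℝ (Fin n)))) ∈ V := by
      rw [hV]
      simp only [mem_preimage, ContinuousMap.const_apply, mem_compl_iff]
      exact OnePoint.infty_notMem_image_coe
    have hev : ∀ᶠ h in nhdsWithin
        (ContinuousMap.const (Set.Icc (0:ℝ) ℓ) (∞ : OnePoint (EuclideanSpace ℝ (Fin n))))
        (closure S), F h = 0 := by
      rw [Filter.eventually_iff, mem_nhdsWithin]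
      refine ⟨V, hVopen, hxV, ?_⟩
      rintro h ⟨hhV, hhcl⟩
      simp only [mem_setOf_eq]
      rcases hSchar h hhcl with ⟨γ', hγ', rfl⟩ | rfl
      · have h0far : (R+ℓ) < ‖γ' ⟨0, hp0⟩‖ := by
          by_contra hcon
          push_neg at hcon
          apply hhV
          exact ⟨γ' ⟨0, hp0⟩, by rwa [Metric.mem_closedBall, dist_zero_right], rfl⟩
        have hfar : ∀ s, R < ‖γ' s‖ := by
          intro s
          have hd : dist (γ' ⟨0, hp0⟩) (γ' s) ≤ ℓ := by
            have := hγ'.dist_le_mul (⟨0, hp0⟩ : Set.Icc (0:ℝ) ℓ) s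
            simpa using this.trans (by simpa using dist_le_of_mem_Icc hℓ.le ⟨0, hp0⟩ s)
          have := norm_sub_norm_le (γ' ⟨0, hp0⟩) (γ' s)
          rw [← dist_eq_norm] at this
          linarith
        have hzero : ∀ t : ℝ, φ (curveExt hℓ.le γ' t) = 0 := by
          intro t
          apply image_eq_zero_of_notMem_tsupport
          intro hmem
          have := hR hmem
          rw [Metric.mem_closedBall, dist_zero_right] at this
          exact absurd this (not_le.2 (hfar _))
        rw [hFS γ' hγ', curveAction]
        have hz : (fun t => ⟪φ (curveExt hℓ.le γ' t), deriv (curveExt hℓ.le γ') t⟫)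
            = fun _ => (0:ℝ) := by
          funext t
          rw [hzero t, inner_zero_left]
        rw [hz]
        simp
      · exact hFinf
    rw [ContinuousWithinAt, hFinf]
    exact Filter.Tendsto.congr' (hev.mono fun h hh => hh.symm) tendsto_const_nhds
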